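/- Let ι : ℝ^k → ℝ^n × ℝ^n be a C² map whose pullback of the Gibbs form vanishes identically: writing ι(y) = (x(y), p(y)), assume ⟨p(y), Dx(y)v⟩ = 0 for all y ∈ ℝ^k and v ∈ ℝ^k. Then for every y ∈ ℝ^k, the rank of the derivative Dι(y) (the dimension of its range) is at most n. -/

import Mathlib

open Module

/-- The standard symplectic form on `ℝ^n × ℝ^n`. -/
noncomputable def omegaForm (n : ℕ) :
    LinearMap.BilinForm ℝ ((Fin n → ℝ) × (Fin n → ℝ)) :=
  LinearMap.mk₂ ℝ (fun u z => (∑ i, u.2 i * z.1 i) - ∑ i, u.1 i * z.2 i)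
    (by intro a b c; simp [add_mul, mul_add, Finset.sum_add_distrib]; ring)
    (by intro c a b; simp only [Prod.smul_fst, Prod.smul_snd, Pi.smul_apply,
        smul_eq_mul, mul_sub, Finset.mul_sum]; congr 1 <;>
      exact Finset.sum_congr rfl fun i _ => by ring)
    (by intro a b c; simp [add_mul, mul_add, Finset.sum_add_distrib]; ring)
    (by intro c a b; simp only [Prod.smul_fst, Prod.smul_snd, Pi.smul_apply,
        smul_eq_mul, mul_sub, Finset.mul_sum]; congr 1 <;>
      exact Finset.sum_congr rfl fun i _ => by ring)

lemma omegaForm_apply (n : ℕ) (u z : (Fin n → ℝ) × (Fin n → ℝ)) :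
    omegaForm n u z = (∑ i, u.2 i * z.1 i) - ∑ i, u.1 i * z.2 i := rfl

lemma omegaForm_isRefl (n : ℕ) : (omegaForm n).IsRefl := by
  intro u z h
  have : omegaForm n z u = -omegaForm n u z := by
    simp only [omegaForm_apply]
    rw [Finset.sum_congr rfl (fun i _ => mul_comm (z.2 i) (u.1 i)),
      Finset.sum_congr rfl (fun i _ => mul_comm (z.1 i) (u.2 i))]
    ring
  rw [this, h, neg_zero]

lemma omegaForm_nondegenerate (n : ℕ) : (omegaForm n).Nondegenerate := by
  refine (omegaForm_isRefl n).nondegenerate_iff_separatingLeft.mpr ?_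
  intro u hu
  ext j
  · have := hu (0, Pi.single j 1)
    simp only [omegaForm_apply] at this
    simpa [Pi.single_apply, Finset.sum_ite_eq', mul_comm, neg_eq_zero] using this
  · have := hu (Pi.single j 1, 0)
    simp only [omegaForm_apply] at this
    simpa [Pi.single_apply, Finset.sum_ite_eq', mul_comm] using this

/-- If the pullback of the Gibbs form `α = Σ pᵢ dxᵢ` under a C² map
`ι : ℝ^k → ℝ^n × ℝ^n` vanishes identically, then the rank of `Dι(y)` is at
most `n` (a system is a Lagrangian submanifold of dimension at most `n`). -/
theorem rank_le_of_pullback_gibbs_vanishes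
    (n k : ℕ)
    (ι : (Fin k → ℝ) → (Fin n → ℝ) × (Fin n → ℝ))
    (hι : ContDiff ℝ 2 ι)
    (x : (Fin k → ℝ) → (Fin n → ℝ)) (p : (Fin k → ℝ) → (Fin n → ℝ))
    (hx : ∀ y, x y = (ι y).1) (hp : ∀ y, p y = (ι y).2)
    (hpull : ∀ (y : Fin k → ℝ) (v : Fin k → ℝ),
      ∑ i, p y i * fderiv ℝ x y v i = 0) :
    ∀ y : Fin k → ℝ,
      Module.finrank ℝ (LinearMap.range (fderiv ℝ ι y : (Fin k → ℝ) →ₗ[ℝ] (Fin n → ℝ) × (Fin n → ℝ))) ≤ n := by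
  intro y₀
  have hxe : x = fun y => (ι y).1 := funext hx
  have hpe : p = fun y => (ι y).2 := funext hp
  have hxd : ContDiff ℝ 2 x := by rw [hxe]; exact (ContinuousLinearMap.fst ℝ _ _).contDiff.comp hι
  have hpd : ContDiff ℝ 2 p := by rw [hpe]; exact (ContinuousLinearMap.snd ℝ _ _).contDiff.comp hι
  set Dx := fderiv ℝ x y₀ with hDx
  set Dp := fderiv ℝ p y₀ with hDp
  set L := fderiv ℝ ι y₀ with hL
  -- L v = (Dx v, Dp v)
  have hιeq : ι = fun y => (x y, p y) := by
    funext y; rw [hx, hp]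
  have hLprod : L = Dx.prod Dp := by
    have h1 : HasFDerivAt ι (Dx.prod Dp) y₀ := by
      rw [hιeq]
      exact HasFDerivAt.prodMk ((hxd.differentiable two_ne_zero y₀).hasFDerivAt)
        ((hpd.differentiable two_ne_zero y₀).hasFDerivAt)
    exact h1.fderiv.symm ▸ rfl
  -- second derivative
  set f'' := fderiv ℝ (fderiv ℝ x) y₀ with hf''
  have hfd1 : ContDiff ℝ 1 (fderiv ℝ x) := hxd.fderiv_right (le_refl 2)
  have hf''at : HasFDerivAt (fderiv ℝ x) f'' y₀ :=
    ((hfd1.differentiable one_ne_zero) y₀).hasFDerivAt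
  have hsym : ∀ v w, f'' v w = f'' w v := hxd.contDiffAt.isSymmSndFDerivAt (by simp [minSmoothness_of_isRCLikeNormedField])
  -- key identity by differentiating the pullback relation
  have key : ∀ v w : Fin k → ℝ,
      (∑ i, Dp v i * Dx w i) + ∑ i, p y₀ i * f'' v w i = 0 := by
    intro v w
    have hF : HasFDerivAt (fun y => ∑ i, p y i * fderiv ℝ x y w i)
        (∑ i, ((p y₀ i) • ((ContinuousLinearMap.proj i).comp
              ((ContinuousLinearMap.apply ℝ (Fin n → ℝ) w).comp f''))
          + (fderiv ℝ x y₀ w i) • ((ContinuousLinearMap.proj i).comp Dp))) y₀ := by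
      apply HasFDerivAt.fun_sum
      intro i _
      have hpi : HasFDerivAt (fun y => p y i)
          ((ContinuousLinearMap.proj i).comp Dp) y₀ :=
        (ContinuousLinearMap.proj i : (Fin n → ℝ) →L[ℝ] ℝ).hasFDerivAt.comp y₀
          ((hpd.differentiable two_ne_zero y₀).hasFDerivAt)
      have hxi : HasFDerivAt (fun y => fderiv ℝ x y w i)
          ((ContinuousLinearMap.proj i).comp
            ((ContinuousLinearMap.apply ℝ (Fin n → ℝ) w).comp f'')) y₀ :=
        (ContinuousLinearMap.proj i : (Fin n → ℝ) →L[ℝ] ℝ).hasFDerivAt.comp y₀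
          ((ContinuousLinearMap.apply ℝ (Fin n → ℝ) w).hasFDerivAt.comp y₀ hf''at)
      exact hpi.mul hxi
    have h0 : HasFDerivAt (fun y => ∑ i, p y i * fderiv ℝ x y w i)
        (0 : (Fin k → ℝ) →L[ℝ] ℝ) y₀ := by
      have : (fun y => ∑ i, p y i * fderiv ℝ x y w i) = fun _ => (0:ℝ) := by
        funext y; exact hpull y w
      rw [this]; exact hasFDerivAt_const 0 y₀
    have heq := hF.unique h0
    have := congrArg (fun (T : (Fin k → ℝ) →L[ℝ] ℝ) => T v) heq
    simp only [ContinuousLinearMap.sum_apply, ContinuousLinearMap.add_apply,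
      ContinuousLinearMap.smul_apply, ContinuousLinearMap.comp_apply,
      ContinuousLinearMap.proj_apply, ContinuousLinearMap.apply_apply,
      ContinuousLinearMap.zero_apply, smul_eq_mul] at this
    rw [Finset.sum_add_distrib] at this
    rw [show (∑ i, Dp v i * Dx w i) = ∑ i, Dx w i * Dp v i from
      Finset.sum_congr rfl fun i _ => mul_comm _ _]
    linarith
  -- isotropy
  have hiso : ∀ v w : Fin k → ℝ,
      (∑ i, Dp v i * Dx w i) = ∑ i, Dp w i * Dx v i := by
    intro v w
    have h1 := key v w
    have h2 := key w v
    have h3 : (∑ i, p y₀ i * f'' v w i) = ∑ i, p y₀ i * f'' w v i := by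
      refine Finset.sum_congr rfl fun i _ => ?_
      rw [hsym v w]
    linarith [h1, h2, h3 ▸ h1]
  -- the range is isotropic for the symplectic form
  set W := LinearMap.range (L : (Fin k → ℝ) →ₗ[ℝ] (Fin n → ℝ) × (Fin n → ℝ)) with hW
  have hWorth : W ≤ (omegaForm n).orthogonal W := by
    rintro z ⟨w', rfl⟩
    rintro u ⟨v', rfl⟩
    show omegaForm n (L v') (L w') = 0
    rw [omegaForm_apply, hLprod]
    simp only [ContinuousLinearMap.prod_apply]
    rw [hiso v' w', sub_eq_zero]
    exact Finset.sum_congr rfl fun i _ => mul_comm _ _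
  have hdim : finrank ℝ W + finrank ℝ ((omegaForm n).orthogonal W) =
      finrank ℝ ((Fin n → ℝ) × (Fin n → ℝ)) := by
    have := LinearMap.BilinForm.finrank_orthogonal (omegaForm_nondegenerate n)
      W
    have hle : finrank ℝ W ≤ finrank ℝ ((Fin n → ℝ) × (Fin n → ℝ)) :=
      Submodule.finrank_le W
    omega
  have hmono : finrank ℝ W ≤ finrank ℝ ((omegaForm n).orthogonal W) :=
    Submodule.finrank_mono hWorth
  have htot : finrank ℝ ((Fin n → ℝ) × (Fin n → ℝ)) = n + n := by
    simp [Module.finrank_prod]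
  omega
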